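/- Define φ : Λ² → ℝ² by φ(x_1,x_2) = (x_1/(1+x_1+x_2), x_2/(1+x_1+x_2)). Then φ is a bijection from Λ² onto the set {y ∈ ℝ² : 0 ≤ y_1 ≤ y_2, y_1+y_2 < 1} (a subset of B of full Lebesgue measure in D = {y ∈ B : y_1+y_2 ≤ 1}), both φ and its inverse map Lebesgue-null sets to Lebesgue-null sets, and for Lebesgue-almost every x ∈ Λ² one has φ(T_{1,1}(x)) = S_{1,2}(φ(x)). -/

import Mathlib

open MeasureTheory Filter Topology

/-- `Λⁿ`: points of `ℝⁿ` with nonnegative, nondecreasing coordinates. -/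
def Lambda (n : ℕ) : Set (Fin n → ℝ) := {x | (∀ i, 0 ≤ x i) ∧ Monotone x}

/-- The vector `(x₁,…,x_a, x_{a+1}-x_a,…,x_{a+b}-x_a)` (0-based indexing). -/
noncomputable def subVec (a b : ℕ) (x : Fin (a + b) → ℝ) : Fin (a + b) → ℝ :=
  fun j => if (j : ℕ) < a then x j else x j - x ⟨a - 1, by have := j.isLt; omega⟩

/-- The map `T_{a,b}`: nondecreasing rearrangement of `subVec a b x`. -/
noncomputable def Tab (a b : ℕ) (x : Fin (a + b) → ℝ) : Fin (a + b) → ℝ :=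
  subVec a b x ∘ Tuple.sort (subVec a b x)
/-- `B`: points of `ℝⁿ` with `0 ≤ x₁ ≤ … ≤ xₙ ≤ 1`. -/
def BSet (n : ℕ) : Set (Fin n → ℝ) :=
  {x | (∀ i, 0 ≤ x i) ∧ Monotone x ∧ ∀ i, x i ≤ 1}

/-- The projected map `S_{1,2} : B → B`: with `y = T_{1,2}(x₁,x₂,1)`,
`S_{1,2}(x) = (y₁/y₃, y₂/y₃)`. -/
noncomputable def S12 (x : Fin 2 → ℝ) : Fin 2 → ℝ :=
  fun i => Tab 1 2 ![x 0, x 1, 1] ⟨i, by have := i.isLt; omega⟩ /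
           Tab 1 2 ![x 0, x 1, 1] ⟨2, by omega⟩

/-- `φ(x₁,x₂) = (x₁/(1+x₁+x₂), x₂/(1+x₁+x₂))`. -/
noncomputable def phi (x : Fin 2 → ℝ) : Fin 2 → ℝ :=
  ![x 0 / (1 + x 0 + x 1), x 1 / (1 + x 0 + x 1)]

/-- The image set `{y : 0 ≤ y₁ ≤ y₂, y₁ + y₂ < 1}`. -/
def W : Set (Fin 2 → ℝ) := {y | 0 ≤ y 0 ∧ y 0 ≤ y 1 ∧ y 0 + y 1 < 1}

/-- `D = {y ∈ B : y₁ + y₂ ≤ 1}`. -/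
def D12 : Set (Fin 2 → ℝ) := {y | y ∈ BSet 2 ∧ y 0 + y 1 ≤ 1}

/-! ### Auxiliary material -/

/-- The inverse of `phi`. -/
noncomputable def psi (y : Fin 2 → ℝ) : Fin 2 → ℝ :=
  ![y 0 / (1 - y 0 - y 1), y 1 / (1 - y 0 - y 1)]

lemma mono2 {f : Fin 2 → ℝ} (h : f 0 ≤ f 1) : Monotone f := by
  intro i j hij
  fin_cases i <;> fin_cases j <;> first
    | exact le_rfl
    | exact h
    | exact absurd hij (by decide)

lemma mono3 {f : Fin 3 → ℝ} (h01 : f 0 ≤ f 1) (h12 : f 1 ≤ f 2) : Monotone f := by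
  intro i j hij
  fin_cases i <;> fin_cases j <;> first
    | exact le_rfl
    | exact h01
    | exact h12
    | exact h01.trans h12
    | exact absurd hij (by decide)

lemma comp_sort_eq {n : ℕ} (f : Fin n → ℝ) (σ : Equiv.Perm (Fin n))
    (h : Monotone (f ∘ σ)) : f ∘ Tuple.sort f = f ∘ σ :=
  (Tuple.comp_sort_eq_comp_iff_monotone.mpr h).symm

lemma lambda2_mem {x : Fin 2 → ℝ} (hx : x ∈ Lambda 2) : 0 ≤ x 0 ∧ x 0 ≤ x 1 :=
  ⟨hx.1 0, hx.2 (by decide : (0 : Fin 2) ≤ 1)⟩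

lemma phi_apply0 (x : Fin 2 → ℝ) : phi x 0 = x 0 / (1 + x 0 + x 1) := rfl
lemma phi_apply1 (x : Fin 2 → ℝ) : phi x 1 = x 1 / (1 + x 0 + x 1) := rfl
lemma psi_apply0 (y : Fin 2 → ℝ) : psi y 0 = y 0 / (1 - y 0 - y 1) := rfl
lemma psi_apply1 (y : Fin 2 → ℝ) : psi y 1 = y 1 / (1 - y 0 - y 1) := rfl

lemma phi_mapsTo : Set.MapsTo phi (Lambda 2) W := by
  intro x hx
  obtain ⟨h0, h01⟩ := lambda2_mem hx
  have hs : (0:ℝ) < 1 + x 0 + x 1 := by linarith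
  refine ⟨by rw [phi_apply0]; positivity, ?_, ?_⟩
  · rw [phi_apply0, phi_apply1]
    exact div_le_div_of_nonneg_right h01 hs.le |>.trans_eq rfl
  · rw [phi_apply0, phi_apply1, ← add_div, div_lt_one hs]
    linarith

lemma psi_mapsTo : Set.MapsTo psi W (Lambda 2) := by
  intro y hy
  obtain ⟨h0, h01, hsum⟩ := hy
  have ht : (0:ℝ) < 1 - y 0 - y 1 := by linarith
  have hy1 : 0 ≤ y 1 := h0.trans h01
  constructor
  · intro i
    fin_cases i
    · show 0 ≤ psi y 0
      rw [psi_apply0]; positivity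
    · show 0 ≤ psi y 1
      rw [psi_apply1]; positivity
  · apply mono2
    rw [psi_apply0, psi_apply1]
    exact div_le_div_of_nonneg_right h01 ht.le

lemma psi_phi {x : Fin 2 → ℝ} (hx : x ∈ Lambda 2) : psi (phi x) = x := by
  obtain ⟨h0, h01⟩ := lambda2_mem hx
  have hs : (0:ℝ) < 1 + x 0 + x 1 := by linarith
  have hs' : (1:ℝ) + x 0 + x 1 ≠ 0 := ne_of_gt hs
  have key : 1 - phi x 0 - phi x 1 = 1 / (1 + x 0 + x 1) := by
    rw [phi_apply0, phi_apply1]; field_simp; ring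
  funext i
  fin_cases i
  · show psi (phi x) 0 = x 0
    rw [psi_apply0, key, phi_apply0]
    field_simp
  · show psi (phi x) 1 = x 1
    rw [psi_apply1, key, phi_apply1]
    field_simp

lemma phi_psi {y : Fin 2 → ℝ} (hy : y ∈ W) : phi (psi y) = y := by
  obtain ⟨h0, h01, hsum⟩ := hy
  have ht : (0:ℝ) < 1 - y 0 - y 1 := by linarith
  have ht' : (1:ℝ) - y 0 - y 1 ≠ 0 := ne_of_gt ht
  have key : 1 + psi y 0 + psi y 1 = 1 / (1 - y 0 - y 1) := by
    rw [psi_apply0, psi_apply1]; field_simp; ring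
  funext i
  fin_cases i
  · show phi (psi y) 0 = y 0
    rw [phi_apply0, key, psi_apply0]
    field_simp
  · show phi (psi y) 1 = y 1
    rw [phi_apply1, key, psi_apply1]
    field_simp

lemma phi_bijOn : Set.BijOn phi (Lambda 2) W := by
  refine ⟨phi_mapsTo, ?_, ?_⟩
  · intro x hx x' hx' h
    rw [← psi_phi hx, ← psi_phi hx', h]
  · intro y hy
    exact ⟨psi y, psi_mapsTo hy, phi_psi hy⟩

lemma diffOn_phi {s : Set (Fin 2 → ℝ)} (hs : s ⊆ Lambda 2) :
    DifferentiableOn ℝ phi s := by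
  have hproj : ∀ i : Fin 2, Differentiable ℝ (fun x : Fin 2 → ℝ => x i) := fun i =>
    (ContinuousLinearMap.proj i : (Fin 2 → ℝ) →L[ℝ] ℝ).differentiable
  have hden : DifferentiableOn ℝ (fun x : Fin 2 → ℝ => 1 + x 0 + x 1) s :=
    ((differentiable_const 1).add (hproj 0)).add (hproj 1) |>.differentiableOn
  have hden0 : ∀ x ∈ s, (1:ℝ) + x 0 + x 1 ≠ 0 := by
    intro x hx
    obtain ⟨h0, h01⟩ := lambda2_mem (hs hx)
    intro h; linarith
  rw [differentiableOn_pi]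
  intro i
  fin_cases i
  · show DifferentiableOn ℝ (fun x : Fin 2 → ℝ => x 0 * (1 + x 0 + x 1)⁻¹) s
    exact ((hproj 0).differentiableOn).mul (hden.inv hden0)
  · show DifferentiableOn ℝ (fun x : Fin 2 → ℝ => x 1 * (1 + x 0 + x 1)⁻¹) s
    exact ((hproj 1).differentiableOn).mul (hden.inv hden0)

lemma diffOn_psi {s : Set (Fin 2 → ℝ)} (hs : s ⊆ W) :
    DifferentiableOn ℝ psi s := by
  have hproj : ∀ i : Fin 2, Differentiable ℝ (fun x : Fin 2 → ℝ => x i) := fun i =>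
    (ContinuousLinearMap.proj i : (Fin 2 → ℝ) →L[ℝ] ℝ).differentiable
  have hden : DifferentiableOn ℝ (fun y : Fin 2 → ℝ => 1 - y 0 - y 1) s :=
    ((differentiable_const 1).sub (hproj 0)).sub (hproj 1) |>.differentiableOn
  have hden0 : ∀ y ∈ s, (1:ℝ) - y 0 - y 1 ≠ 0 := by
    intro y hy
    obtain ⟨h0, h01, hsum⟩ := hs hy
    intro h; linarith
  rw [differentiableOn_pi]
  intro i
  fin_cases i
  · show DifferentiableOn ℝ (fun y : Fin 2 → ℝ => y 0 * (1 - y 0 - y 1)⁻¹) s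
    exact ((hproj 0).differentiableOn).mul (hden.inv hden0)
  · show DifferentiableOn ℝ (fun y : Fin 2 → ℝ => y 1 * (1 - y 0 - y 1)⁻¹) s
    exact ((hproj 1).differentiableOn).mul (hden.inv hden0)

/-- The linear functional `y ↦ y 0 + y 1`. -/
noncomputable def ell : (Fin 2 → ℝ) →ₗ[ℝ] ℝ where
  toFun y := y 0 + y 1
  map_add' x y := by simp [Pi.add_apply]; ring
  map_smul' c x := by simp [Pi.smul_apply]; ring

lemma measure_hyperplane : volume {y : Fin 2 → ℝ | y 0 + y 1 = 1} = 0 := by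
  set P : AffineSubspace ℝ (Fin 2 → ℝ) :=
    AffineSubspace.mk' ![1, 0] (LinearMap.ker ell) with hP
  have hmem : ∀ y : Fin 2 → ℝ, y ∈ P ↔ y 0 + y 1 = 1 := by
    intro y
    rw [hP, AffineSubspace.mem_mk', LinearMap.mem_ker]
    have : ell (y -ᵥ ![1, 0]) = y 0 + y 1 - 1 := by
      simp [ell, vsub_eq_sub, Pi.sub_apply, Matrix.vecHead, Matrix.vecTail]
      ring
    rw [this]
    constructor <;> intro h <;> linarith
  have hne : P ≠ ⊤ := by
    intro h
    have : (0 : Fin 2 → ℝ) ∈ P := h ▸ AffineSubspace.mem_top ℝ _ _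
    rw [hmem] at this
    norm_num at this
  have hsub : {y : Fin 2 → ℝ | y 0 + y 1 = 1} ⊆ (P : Set (Fin 2 → ℝ)) := by
    intro y hy
    exact (hmem y).mpr hy
  exact measure_mono_null hsub (Measure.addHaar_affineSubspace volume P hne)

lemma lambda2_inter_preimage {N : Set (Fin 2 → ℝ)} (hN : N ⊆ W) :
    Lambda 2 ∩ phi ⁻¹' N = psi '' N := by
  ext x
  constructor
  · rintro ⟨hx, hpx⟩
    exact ⟨phi x, hpx, psi_phi hx⟩
  · rintro ⟨y, hy, rfl⟩
    exact ⟨psi_mapsTo (hN hy), by rw [Set.mem_preimage, phi_psi (hN hy)]; exact hy⟩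

lemma subVec11 (x : Fin 2 → ℝ) : subVec 1 1 x = ![x 0, x 1 - x 0] := by
  funext j
  fin_cases j <;> simp [subVec]

lemma subVec12 (v : Fin 3 → ℝ) : subVec 1 2 v = ![v 0, v 1 - v 0, v 2 - v 0] := by
  funext j
  fin_cases j <;> simp [subVec] <;> rfl

lemma commute_everywhere {x : Fin 2 → ℝ} (hx : x ∈ Lambda 2) :
    phi (Tab 1 1 x) = S12 (phi x) := by
  obtain ⟨h0, h01⟩ := lambda2_mem hx
  set a := x 0 with ha
  set b := x 1 with hb
  have hs : (0:ℝ) < 1 + a + b := by linarith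
  have hs' : (1:ℝ) + a + b ≠ 0 := ne_of_gt hs
  have hb1 : (0:ℝ) < 1 + b := by linarith
  have hb1' : (1:ℝ) + b ≠ 0 := ne_of_gt hb1
  -- the inner vector of S12
  have hv : (![phi x 0, phi x 1, 1] : Fin 3 → ℝ) = ![a / (1+a+b), b / (1+a+b), 1] := by
    funext j; fin_cases j <;> simp [phi_apply0, phi_apply1] <;> rfl
  have hsub2 : subVec 1 2 ![phi x 0, phi x 1, 1]
      = ![a/(1+a+b), (b-a)/(1+a+b), (1+b)/(1+a+b)] := by
    rw [hv, subVec12]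
    funext j
    fin_cases j <;> simp <;> field_simp <;> ring
  have hsub1 : subVec 1 1 x = ![a, b - a] := subVec11 x
  by_cases hcase : a ≤ b - a
  · -- already sorted
    have h1 : Tab 1 1 x = ![a, b - a] := by
      have := comp_sort_eq (subVec 1 1 x) (Equiv.refl _) ?_
      · rw [Tab, this]; simpa using hsub1
      · rw [hsub1]
        apply mono2; simpa using hcase
    have h2 : Tab 1 2 ![phi x 0, phi x 1, 1]
        = ![a/(1+a+b), (b-a)/(1+a+b), (1+b)/(1+a+b)] := by
      have := comp_sort_eq (subVec 1 2 ![phi x 0, phi x 1, 1]) (Equiv.refl _) ?_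
      · rw [Tab, this]; simpa using hsub2
      · rw [hsub2]
        apply mono3 <;> simp
        · exact div_le_div_of_nonneg_right hcase hs.le
        · apply div_le_div_of_nonneg_right _ hs.le; linarith
    funext i
    fin_cases i
    · show phi (Tab 1 1 x) 0 = S12 (phi x) 0
      rw [h1, phi_apply0, S12]
      simp only [h2]
      norm_num
      rw [div_div_div_cancel_right₀ hs']
      try rw [(by ring : (1:ℝ) + (b - a) + a = 1 + b)]
    · show phi (Tab 1 1 x) 1 = S12 (phi x) 1
      rw [h1, phi_apply1, S12]
      simp only [h2]
      norm_num
      rw [div_div_div_cancel_right₀ hs']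
      try rw [(by ring : (1:ℝ) + (b - a) + a = 1 + b)]
  · push_neg at hcase
    have hcase' : b - a ≤ a := le_of_lt hcase
    have h1 : Tab 1 1 x = ![b - a, a] := by
      have := comp_sort_eq (subVec 1 1 x) (Equiv.swap 0 1) ?_
      · rw [Tab, this, hsub1]
        funext j
        fin_cases j <;> simp [Equiv.swap_apply_left, Equiv.swap_apply_right]
      · rw [hsub1]
        apply mono2
        simp [Equiv.swap_apply_left, Equiv.swap_apply_right]
        linarith
    have h2 : Tab 1 2 ![phi x 0, phi x 1, 1]
        = ![(b-a)/(1+a+b), a/(1+a+b), (1+b)/(1+a+b)] := by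
      have := comp_sort_eq (subVec 1 2 ![phi x 0, phi x 1, 1]) (Equiv.swap 0 1) ?_
      · rw [Tab, this, hsub2]
        funext j
        fin_cases j <;>
          simp [Equiv.swap_apply_left, Equiv.swap_apply_right,
            Equiv.swap_apply_of_ne_of_ne]
      · rw [hsub2]
        apply mono3 <;>
          simp [Equiv.swap_apply_left, Equiv.swap_apply_right,
            Equiv.swap_apply_of_ne_of_ne]
        · exact div_le_div_of_nonneg_right hcase' hs.le
        · apply div_le_div_of_nonneg_right _ hs.le; linarith
    funext i
    fin_cases i
    · show phi (Tab 1 1 x) 0 = S12 (phi x) 0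
      rw [h1, phi_apply0, S12]
      simp only [h2]
      norm_num
      rw [div_div_div_cancel_right₀ hs']
      try rw [(by ring : (1:ℝ) + (b - a) + a = 1 + b)]
    · show phi (Tab 1 1 x) 1 = S12 (phi x) 1
      rw [h1, phi_apply1, S12]
      simp only [h2]
      norm_num
      rw [div_div_div_cancel_right₀ hs']
      try rw [(by ring : (1:ℝ) + (b - a) + a = 1 + b)]

/-- `φ` is a bijection from `Λ²` onto `W` (a subset of `B` of full
Lebesgue measure in `D`), `φ` and `φ⁻¹` send null sets to null sets, and
`φ ∘ T_{1,1} = S_{1,2} ∘ φ` almost everywhere on `Λ²`. -/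
theorem statement8 :
    Set.BijOn phi (Lambda 2) W ∧
    W ⊆ BSet 2 ∧ volume (D12 \ W) = 0 ∧
    (∀ N ⊆ Lambda 2, volume N = 0 → volume (phi '' N) = 0) ∧
    (∀ N ⊆ W, volume N = 0 → volume (Lambda 2 ∩ phi ⁻¹' N) = 0) ∧
    (∀ᵐ x : Fin 2 → ℝ, x ∈ Lambda 2 → phi (Tab 1 1 x) = S12 (phi x)) := by
  refine ⟨phi_bijOn, ?_, ?_, ?_, ?_, ?_⟩
  · -- W ⊆ BSet 2
    rintro y ⟨h0, h01, hsum⟩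
    refine ⟨?_, mono2 h01, ?_⟩
    · intro i; fin_cases i
      · exact h0
      · exact h0.trans h01
    · intro i; fin_cases i
      · show y 0 ≤ 1; linarith
      · show y 1 ≤ 1; linarith
  · -- volume (D12 \ W) = 0
    refine measure_mono_null ?_ measure_hyperplane
    rintro y ⟨⟨⟨hpos, hmono, hle⟩, hsum⟩, hnW⟩
    have h0 : 0 ≤ y 0 := hpos 0
    have h01 : y 0 ≤ y 1 := hmono (by decide : (0 : Fin 2) ≤ 1)
    have : ¬ (y 0 + y 1 < 1) := fun h => hnW ⟨h0, h01, h⟩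
    push_neg at this
    exact le_antisymm hsum this
  · -- phi maps null sets to null sets
    intro N hN hvol
    exact addHaar_image_eq_zero_of_differentiableOn_of_addHaar_eq_zero volume
      (diffOn_phi hN) hvol
  · -- phi⁻¹ maps null sets to null sets
    intro N hN hvol
    rw [lambda2_inter_preimage hN]
    exact addHaar_image_eq_zero_of_differentiableOn_of_addHaar_eq_zero volume
      (diffOn_psi hN) hvol
  · exact Filter.Eventually.of_forall fun x hx => commute_everywhere hx
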